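/- arXiv:1303.3231 — 5 statements merged into one kernel-verified Lean document; each statement's English description precedes it below -/
import Mathlib

section
/- Let N be a left Novikov algebra, G a commutative semigroup, and χ: G → K a quasi-character (i.e. χ(ab) − χ(ac) = χ(b) − χ(c) for all a,b,c ∈ G). Then the bracket [x⊗a, y⊗b] = (χ(a)xy − χ(b)yx)⊗ab on N ⊗ K[G] satisfies the Jacobi identity. -/
open TensorProduct

/-- For a left Novikov algebra `N`, a commutative semigroup `G` and a
quasi-character `χ : G → K`, the bracket
`[x ⊗ a, y ⊗ b] = (χ(a)·xy - χ(b)·yx) ⊗ ab` on `N ⊗ K[G]` satisfies the Jacobi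
identity. -/
theorem novikov_quasiCharacter_jacobi (K : Type*) [Field K]
    (N : Type*) [NonUnitalNonAssocRing N] [Module K N]
    [SMulCommClass K N N] [IsScalarTower K N N]
    (hN1 : ∀ x y z : N, (x*y)*z - x*(y*z) = (y*x)*z - y*(x*z))
    (hN2 : ∀ x y z : N, (x*y)*z = (x*z)*y)
    (G : Type*) [CommSemigroup G] (χ : G → K)
    (hχ : ∀ a b c : G, χ (a*b) - χ (a*c) = χ b - χ c) :
    ∃ B : N ⊗[K] MonoidAlgebra K G →ₗ[K] N ⊗[K] MonoidAlgebra K G →ₗ[K]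
        N ⊗[K] MonoidAlgebra K G,
      (∀ (x y : N) (a b : G),
        B (x ⊗ₜ MonoidAlgebra.single a 1) (y ⊗ₜ MonoidAlgebra.single b 1)
          = (χ a • (x*y) - χ b • (y*x)) ⊗ₜ MonoidAlgebra.single (a*b) 1) ∧
      (∀ u v w, B (B u v) w + B (B w u) v + B (B v w) u = 0) := by
  classical
  let sχ : MonoidAlgebra K G →ₗ[K] MonoidAlgebra K G :=
    (Finsupp.lsum K fun a => χ a • MonoidAlgebra.lsingle a) ∘ₗ
      (MonoidAlgebra.coeffLinearEquiv K).toLinearMap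
  let L : N ⊗[K] MonoidAlgebra K G →ₗ[K] N ⊗[K] MonoidAlgebra K G :=
    TensorProduct.map LinearMap.id sχ
  let M : N ⊗[K] MonoidAlgebra K G →ₗ[K] N ⊗[K] MonoidAlgebra K G →ₗ[K]
      N ⊗[K] MonoidAlgebra K G := LinearMap.mul K (N ⊗[K] MonoidAlgebra K G)
  let Br : N ⊗[K] MonoidAlgebra K G →ₗ[K] N ⊗[K] MonoidAlgebra K G →ₗ[K]
      N ⊗[K] MonoidAlgebra K G :=
    LinearMap.mk₂ K (fun u v => M (L u) v - M (L v) u)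
      (by intro m₁ m₂ n; simp only [map_add, LinearMap.add_apply]; abel)
      (by intro c m n; simp only [map_smul, LinearMap.smul_apply, smul_sub])
      (by intro m n₁ n₂; simp only [map_add, LinearMap.add_apply]; abel)
      (by intro c m n; simp only [map_smul, LinearMap.smul_apply, smul_sub])
  have hB : ∀ (x y : N) (a b : G),
      Br (x ⊗ₜ MonoidAlgebra.single a 1) (y ⊗ₜ MonoidAlgebra.single b 1)
        = (χ a • (x*y) - χ b • (y*x)) ⊗ₜ MonoidAlgebra.single (a*b) 1 := by
    intro x y a b
    show M (L (x ⊗ₜ MonoidAlgebra.single a 1)) (y ⊗ₜ MonoidAlgebra.single b 1)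
        - M (L (y ⊗ₜ MonoidAlgebra.single b 1)) (x ⊗ₜ MonoidAlgebra.single a 1) = _
    have hL : ∀ (x : N) (a : G),
        L (x ⊗ₜ MonoidAlgebra.single a 1) = χ a • (x ⊗ₜ MonoidAlgebra.single a 1) := by
      intro x a
      show (x ⊗ₜ sχ (MonoidAlgebra.single a 1) : N ⊗[K] MonoidAlgebra K G) = _
      rw [show sχ (MonoidAlgebra.single a 1) = χ a • MonoidAlgebra.single a 1 from
        Finsupp.lsum_single (S := K) _ _ _, tmul_smul]
    rw [hL, hL, map_smul, map_smul, LinearMap.smul_apply, LinearMap.smul_apply]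
    show χ a • ((x ⊗ₜ MonoidAlgebra.single a 1 : N ⊗[K] MonoidAlgebra K G)
          * (y ⊗ₜ MonoidAlgebra.single b 1))
        - χ b • ((y ⊗ₜ MonoidAlgebra.single b 1 : N ⊗[K] MonoidAlgebra K G)
          * (x ⊗ₜ MonoidAlgebra.single a 1)) = _
    rw [Algebra.TensorProduct.tmul_mul_tmul, Algebra.TensorProduct.tmul_mul_tmul,
      MonoidAlgebra.single_mul_single, MonoidAlgebra.single_mul_single, one_mul,
      mul_comm b a, smul_tmul', smul_tmul', ← sub_tmul]
  refine ⟨Br, hB, ?_⟩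
  -- package the Jacobi sum as one trilinear map and use ext
  let T : N ⊗[K] MonoidAlgebra K G →ₗ[K] N ⊗[K] MonoidAlgebra K G →ₗ[K]
      N ⊗[K] MonoidAlgebra K G →ₗ[K] N ⊗[K] MonoidAlgebra K G := Br.compr₂ Br
  let cyc : (N ⊗[K] MonoidAlgebra K G →ₗ[K] N ⊗[K] MonoidAlgebra K G →ₗ[K]
        N ⊗[K] MonoidAlgebra K G →ₗ[K] N ⊗[K] MonoidAlgebra K G) →
      (N ⊗[K] MonoidAlgebra K G →ₗ[K] N ⊗[K] MonoidAlgebra K G →ₗ[K]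
        N ⊗[K] MonoidAlgebra K G →ₗ[K] N ⊗[K] MonoidAlgebra K G) :=
    fun T => ((LinearMap.lflip (R₀ := K)).toLinearMap ∘ₗ T).flip
  have hcyc : ∀ (T : N ⊗[K] MonoidAlgebra K G →ₗ[K] N ⊗[K] MonoidAlgebra K G →ₗ[K]
        N ⊗[K] MonoidAlgebra K G →ₗ[K] N ⊗[K] MonoidAlgebra K G)
      (u v w : N ⊗[K] MonoidAlgebra K G), cyc T u v w = T v w u := by
    intro T u v w; rfl
  have hJ : T + cyc (cyc T) + cyc T = 0 := by
    ext x a y b z c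
    show T _ _ _ + cyc (cyc T) _ _ _ + cyc T _ _ _ = 0
    rw [hcyc, hcyc, hcyc]
    show Br (Br _ _) _ + Br (Br _ _) _ + Br (Br _ _) _ = 0
    simp only [TensorProduct.mk_apply, MonoidAlgebra.lsingle_apply]
    rw [hB, hB, hB, hB, hB, hB]
    have e2 : (c*a)*b = (a*b)*c := mul_rotate c a b
    have e3 : (b*c)*a = (a*b)*c := (mul_rotate a b c).symm
    rw [e2, e3, ← add_tmul, ← add_tmul]
    have key : ∀ (A B C P Q R : K), P = Q + B - C → R = Q + B - A → ∀ x y z : N,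
        (P • ((A • (x*y) - B • (y*x)) * z) - C • (z * (A • (x*y) - B • (y*x))))
        + (Q • ((C • (z*x) - A • (x*z)) * y) - B • (y * (C • (z*x) - A • (x*z))))
        + (R • ((B • (y*z) - C • (z*y)) * x) - A • (x * (B • (y*z) - C • (z*y)))) = 0 := by
      intro A B C P Q R hP hR x y z
      subst hP hR
      have h4 : y*(x*z) = (y*x)*z - ((x*y)*z - x*(y*z)) := by rw [hN1 x y z]; abel
      have h5 : x*(z*y) = (x*z)*y - ((z*x)*y - z*(x*y)) := by rw [hN1 z x y]; abel
      have h6 : z*(y*x) = (z*y)*x - ((y*z)*x - y*(z*x)) := by rw [hN1 y z x]; abel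
      have h1 : (x*z)*y = (x*y)*z := (hN2 x y z).symm
      have h2 : (y*z)*x = (y*x)*z := (hN2 y x z).symm
      have h3 : (z*y)*x = (z*x)*y := (hN2 z x y).symm
      simp only [smul_sub, sub_mul, mul_sub, smul_mul_assoc, mul_smul_comm, smul_smul]
      rw [h4, h5, h6, h1, h2, h3]
      match_scalars <;> ring
    rw [key (χ a) (χ b) (χ c) (χ (a*b)) (χ (c*a)) (χ (b*c)) ?_ ?_ x y z, zero_tmul]
    · have h := hχ a b c
      rw [mul_comm c a]; linear_combination h
    · have h := hχ c b a
      rw [mul_comm b c]; linear_combination h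
  intro u v w
  have := LinearMap.congr_fun (LinearMap.congr_fun (LinearMap.congr_fun hJ u) v) w
  simpa [hcyc, T] using this
end

section
/- Let G be a commutative semigroup and χ: G → K a quasi-character. Then the semigroup algebra K[G] with the new multiplication a · b = χ(a)ab (for a,b ∈ G, extended bilinearly) is a right Novikov algebra. -/
noncomputable def novMul (K : Type*) [Field K] (G : Type*) [CommSemigroup G] (χ : G → K) :
    MonoidAlgebra K G →ₗ[K] MonoidAlgebra K G →ₗ[K] MonoidAlgebra K G :=
  (Finsupp.lsum K fun a => LinearMap.toSpanSingleton K (MonoidAlgebra K G →ₗ[K] MonoidAlgebra K G)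
    ((Finsupp.lsum K fun b => LinearMap.toSpanSingleton K (MonoidAlgebra K G)
      (χ a • MonoidAlgebra.single (a*b) 1)) ∘ₗ (MonoidAlgebra.coeffLinearEquiv K).toLinearMap))
    ∘ₗ (MonoidAlgebra.coeffLinearEquiv K).toLinearMap

lemma novMul_single (K : Type*) [Field K] (G : Type*) [CommSemigroup G] (χ : G → K)
    (a b : G) (k l : K) :
    novMul K G χ (MonoidAlgebra.single a k) (MonoidAlgebra.single b l)
      = (k * l * χ a) • MonoidAlgebra.single (a*b) 1 := by
  simp [novMul, MonoidAlgebra.coeff_single, Finsupp.lsum_single, smul_smul]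
  ring

/-- For a commutative semigroup `G` and a quasi-character `χ : G → K`, the
semigroup algebra `K[G]` with new multiplication `a · b = χ(a)·ab` is a right
Novikov algebra. -/
theorem quasiCharacter_rightNovikov (K : Type*) [Field K]
    (G : Type*) [CommSemigroup G] (χ : G → K)
    (hχ : ∀ a b c : G, χ (a*b) - χ (a*c) = χ b - χ c) :
    ∃ m : MonoidAlgebra K G →ₗ[K] MonoidAlgebra K G →ₗ[K] MonoidAlgebra K G,
      (∀ a b : G,
        m (MonoidAlgebra.single a 1) (MonoidAlgebra.single b 1)
          = χ a • MonoidAlgebra.single (a*b) 1) ∧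
      (∀ x y z, m (m x y) z - m x (m y z) = m (m x z) y - m x (m z y)) ∧
      (∀ x y z, m x (m y z) = m y (m x z)) := by
  set m := novMul K G χ with hm
  have hs : ∀ (a b : G) (k l : K),
      m (MonoidAlgebra.single a k) (MonoidAlgebra.single b l)
        = (k * l * χ a) • MonoidAlgebra.single (a*b) 1 := novMul_single K G χ
  refine ⟨m, ?_, ?_, ?_⟩
  · intro a b; rw [hs]; ring_nf
  · -- right Novikov identity
    have key : ∀ (a b c : G) (k l n : K),
        m (m (MonoidAlgebra.single a k) (MonoidAlgebra.single b l)) (MonoidAlgebra.single c n)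
          - m (MonoidAlgebra.single a k) (m (MonoidAlgebra.single b l) (MonoidAlgebra.single c n))
        = m (m (MonoidAlgebra.single a k) (MonoidAlgebra.single c n)) (MonoidAlgebra.single b l)
          - m (MonoidAlgebra.single a k) (m (MonoidAlgebra.single c n) (MonoidAlgebra.single b l)) := by
      intro a b c k l n
      simp only [hs, map_smul, LinearMap.smul_apply, smul_smul]
      have h1 : a * c * b = a * b * c := by rw [mul_assoc, mul_assoc, mul_comm c b]
      have h2 : a * (b * c) = a * b * c := (mul_assoc a b c).symm
      have h3 : a * (c * b) = a * b * c := by rw [mul_comm c b, mul_assoc]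
      rw [h1, h2, h3, ← sub_smul, ← sub_smul]
      congr 1
      linear_combination (k * l * n * χ a) * hχ a b c
    intro x y z
    induction x using MonoidAlgebra.induction_linear with
    | zero => simp
    | add p q hp hq =>
        simp only [map_add, LinearMap.add_apply]
        rw [← sub_add_sub_comm, ← sub_add_sub_comm, hp, hq]
    | single a k =>
      induction y using MonoidAlgebra.induction_linear with
      | zero => simp
      | add p q hp hq =>
          simp only [map_add, LinearMap.add_apply]
          rw [← sub_add_sub_comm, ← sub_add_sub_comm, hp, hq]
      | single b l =>
        induction z using MonoidAlgebra.induction_linear with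
        | zero => simp
        | add p q hp hq =>
            simp only [map_add, LinearMap.add_apply]
            rw [← sub_add_sub_comm, ← sub_add_sub_comm, hp, hq]
        | single c n => exact key a b c k l n
  · -- left commutativity
    have key : ∀ (a b c : G) (k l n : K),
        m (MonoidAlgebra.single a k) (m (MonoidAlgebra.single b l) (MonoidAlgebra.single c n))
        = m (MonoidAlgebra.single b l) (m (MonoidAlgebra.single a k) (MonoidAlgebra.single c n)) := by
      intro a b c k l n
      simp only [hs, map_smul, smul_smul]
      have h : a * (b * c) = b * (a * c) := by
        rw [← mul_assoc, ← mul_assoc, mul_comm a b]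
      rw [h]
      ring_nf
    intro x y z
    induction x using MonoidAlgebra.induction_linear with
    | zero => simp
    | add p q hp hq => simp only [map_add, LinearMap.add_apply]; rw [hp, hq]
    | single a k =>
      induction y using MonoidAlgebra.induction_linear with
      | zero => simp
      | add p q hp hq => simp only [map_add, LinearMap.add_apply]; rw [hp, hq]
      | single b l =>
        induction z using MonoidAlgebra.induction_linear with
        | zero => simp
        | add p q hp hq => simp only [map_add, LinearMap.add_apply]; rw [hp, hq]
        | single c n => exact key a b c k l n
end

section
/- For n ≥ 2 over a field K of characteristic zero, the bilinear map X ⋆ Y = ½(XY + YX) − (1/n)Tr(XY)·E on sl_n(K) is a commutative Poisson structure: it takes values in sl_n(K), is symmetric, and satisfies [Z, X⋆Y] = [Z,X]⋆Y + X⋆[Z,Y] for all traceless X, Y, Z. -/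
/-- For `n ≥ 2` and `char K = 0`, the map
`X ⋆ Y = ½(XY + YX) - (1/n)Tr(XY)·E` is a commutative Poisson structure on
`sl_n(K)`: it is `sl_n`-valued, symmetric, and satisfies the Leibniz
compatibility with the commutator bracket. -/
theorem sln_standard_poisson (K : Type*) [Field K] [CharZero K]
    (n : ℕ) (hn : 2 ≤ n)
    (star : Matrix (Fin n) (Fin n) K → Matrix (Fin n) (Fin n) K →
      Matrix (Fin n) (Fin n) K)
    (hstar : ∀ X Y, star X Y
      = (2:K)⁻¹ • (X * Y + Y * X) - ((n:K)⁻¹ * (X * Y).trace) • 1) :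
    ∀ X Y Z : Matrix (Fin n) (Fin n) K,
      X.trace = 0 → Y.trace = 0 → Z.trace = 0 →
      (star X Y).trace = 0 ∧
      star X Y = star Y X ∧
      Z * star X Y - star X Y * Z
        = star (Z * X - X * Z) Y + star X (Z * Y - Y * Z) := by
  intro X Y Z hX hY hZ
  have hn0 : (n:K) ≠ 0 := Nat.cast_ne_zero.mpr (by omega)
  refine ⟨?_, ?_, ?_⟩
  · simp only [hstar, Matrix.trace_sub, Matrix.trace_smul, Matrix.trace_add,
      Matrix.trace_one, Matrix.trace_mul_comm Y X, smul_eq_mul, Finset.card_univ,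
      Fintype.card_fin]
    field_simp
    ring
  · rw [hstar, hstar, Matrix.trace_mul_comm]
    rw [add_comm (X*Y)]
  · have hc : ((Z * X - X * Z) * Y).trace + (X * (Z * Y - Y * Z)).trace = 0 := by
      simp only [Matrix.sub_mul, Matrix.mul_sub, Matrix.trace_sub, mul_assoc]
      rw [Matrix.trace_mul_comm Z (X*Y), mul_assoc]
      ring
    simp only [hstar]
    have hcomm : ∀ (c : K), Z * (c • (1 : Matrix (Fin n) (Fin n) K)) = (c • 1) * Z := by
      intro c; simp [Matrix.mul_smul, Matrix.smul_mul]
    rw [mul_sub, sub_mul, hcomm]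
    have hc' : ((n:K)⁻¹ * ((Z * X - X * Z) * Y).trace) • (1 : Matrix (Fin n) (Fin n) K)
        + ((n:K)⁻¹ * (X * (Z * Y - Y * Z)).trace) • 1 = 0 := by
      rw [← add_smul, ← mul_add, hc, mul_zero, zero_smul]
    rw [sub_add_sub_comm, hc', sub_zero]
    rw [sub_sub_sub_cancel_right, Matrix.mul_smul, Matrix.smul_mul, ← smul_sub, ← smul_add]
    congr 1
    noncomm_ring
end

section
/- Let L be a Lie algebra, A a commutative associative unital algebra, M an L-module, and V a unital A-module. The maps ξ: C^n(L,M)⊗V → C^n(L⊗A, M⊗V) defined by ξ(φ⊗v)(x₁⊗a₁, …, x_n⊗a_n) = φ(x₁,…,x_n) ⊗ (a₁⋯a_n)·v commute with the Chevalley–Eilenberg differentials, i.e. form a morphism of cochain complexes. -/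
open TensorProduct

/-- The map `ξ(φ ⊗ v)(x₁⊗a₁, …, xₙ⊗aₙ) = φ(x₁,…,xₙ) ⊗ (a₁⋯aₙ)·v` commutes with
the Chevalley–Eilenberg differentials: on pure tensors,
`d_{L⊗A}(ξ(φ ⊗ v)) = ξ(d_L φ ⊗ v)`, where the differential of `ξ(φ ⊗ v)` is
given by the standard formula for the current Lie algebra `L ⊗ A` acting on
`M ⊗ V`. -/
theorem xi_cochain_morphism (K : Type*) [Field K]
    (L : Type*) [LieRing L] [LieAlgebra K L]
    (A : Type*) [CommRing A] [Algebra K A]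
    (M : Type*) [AddCommGroup M] [Module K M] [LieRingModule L M] [LieModule K L M]
    (V : Type*) [AddCommGroup V] [Module K V] [Module A V] [IsScalarTower K A V]
    (n : ℕ) (φ : AlternatingMap K L M (Fin n)) (v : V) :
    ∀ (x : Fin (n+1) → L) (a : Fin (n+1) → A),
      ((∑ i : Fin (n+1), (-1:ℤ)^(i:ℕ) •
          (⁅x i, φ (x ∘ i.succAbove)⁆
            ⊗ₜ[K] (a i • ((∏ k : Fin n, (a ∘ i.succAbove) k) • v))))
        + ∑ j : Fin (n+1), ∑ i : Fin (n+1),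
            if h : (i : ℕ) < (j : ℕ) then
              (-1:ℤ)^(j:ℕ) •
                (φ (Function.update (x ∘ j.succAbove)
                      ⟨i, h.trans_le (Nat.lt_succ_iff.mp j.isLt)⟩ ⁅x i, x j⁆)
                  ⊗ₜ[K]
                  ((∏ k : Fin n, Function.update (a ∘ j.succAbove)
                      ⟨i, h.trans_le (Nat.lt_succ_iff.mp j.isLt)⟩ (a i * a j) k) • v))
            else 0)
      =
      ((∑ i : Fin (n+1), (-1:ℤ)^(i:ℕ) • ⁅x i, φ (x ∘ i.succAbove)⁆)
        + ∑ j : Fin (n+1), ∑ i : Fin (n+1),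
            if h : (i : ℕ) < (j : ℕ) then
              (-1:ℤ)^(j:ℕ) •
                φ (Function.update (x ∘ j.succAbove)
                    ⟨i, h.trans_le (Nat.lt_succ_iff.mp j.isLt)⟩ ⁅x i, x j⁆)
            else 0)
        ⊗ₜ[K] ((∏ i : Fin (n+1), a i) • v) := by
  intro x a
  have hP : ∀ i : Fin (n+1),
      a i • ((∏ k : Fin n, (a ∘ i.succAbove) k) • v) = (∏ i : Fin (n+1), a i) • v := by
    intro i
    simp only [Function.comp_apply, smul_smul, ← Fin.prod_univ_succAbove a i]
  have hQ : ∀ (j i : Fin (n+1)) (h : (i : ℕ) < (j : ℕ)),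
      (∏ k : Fin n, Function.update (a ∘ j.succAbove)
          ⟨i, h.trans_le (Nat.lt_succ_iff.mp j.isLt)⟩ (a i * a j) k)
        = ∏ i : Fin (n+1), a i := by
    intro j i h
    set i0 : Fin n := ⟨i, h.trans_le (Nat.lt_succ_iff.mp j.isLt)⟩ with hi0
    have hsa : j.succAbove i0 = i := by
      rw [Fin.succAbove_of_castSucc_lt]
      · exact Fin.ext rfl
      · exact h
    simp only [Function.comp_def]
    rw [Finset.prod_update_of_mem (Finset.mem_univ i0),
      Fin.prod_univ_succAbove a j,
      Finset.prod_eq_mul_prod_sdiff_singleton_of_mem (Finset.mem_univ i0) (fun k => a (j.succAbove k)),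
      hsa]
    ring
  have key1 : ∀ i : Fin (n+1),
      (-1:ℤ)^(i:ℕ) •
          (⁅x i, φ (x ∘ i.succAbove)⁆
            ⊗ₜ[K] (a i • ((∏ k : Fin n, (a ∘ i.succAbove) k) • v)))
        = ((-1:ℤ)^(i:ℕ) • ⁅x i, φ (x ∘ i.succAbove)⁆)
            ⊗ₜ[K] ((∏ i : Fin (n+1), a i) • v) := by
    intro i
    rw [hP i]
    rfl
  have key2 : ∀ j i : Fin (n+1),
      (if h : (i : ℕ) < (j : ℕ) then
          (-1:ℤ)^(j:ℕ) •
            (φ (Function.update (x ∘ j.succAbove)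
                  ⟨i, h.trans_le (Nat.lt_succ_iff.mp j.isLt)⟩ ⁅x i, x j⁆)
              ⊗ₜ[K]
              ((∏ k : Fin n, Function.update (a ∘ j.succAbove)
                  ⟨i, h.trans_le (Nat.lt_succ_iff.mp j.isLt)⟩ (a i * a j) k) • v))
        else 0)
      = (if h : (i : ℕ) < (j : ℕ) then
          (-1:ℤ)^(j:ℕ) •
            φ (Function.update (x ∘ j.succAbove)
                ⟨i, h.trans_le (Nat.lt_succ_iff.mp j.isLt)⟩ ⁅x i, x j⁆)
        else 0) ⊗ₜ[K] ((∏ i : Fin (n+1), a i) • v) := by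
    intro j i
    split
    · next h =>
      rw [hQ j i h]
      rfl
    · rw [TensorProduct.zero_tmul]
  simp only [key1, key2]
  rw [TensorProduct.add_tmul, TensorProduct.sum_tmul]
  congr 1
  rw [TensorProduct.sum_tmul]
  exact Finset.sum_congr rfl fun j _ => (TensorProduct.sum_tmul ..).symm
end

section
/- Let L be a perfect Lie algebra ([L,L] = L) and A a commutative associative unital algebra, with one of L, A finite-dimensional. Then the centroid of the current Lie algebra L⊗A is isomorphic to Cent(L)⊗A; explicitly, every centroidal map of L⊗A is a sum of maps of the form x⊗a ↦ φ(x)⊗(au) with φ ∈ Cent(L) and u ∈ A. -/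
open TensorProduct

/-- For a perfect Lie algebra `L` and a commutative unital algebra `A` (one of
them finite-dimensional), every centroidal map of the current Lie algebra
`L ⊗ A` is a sum of maps `x ⊗ a ↦ φ(x) ⊗ au` with `φ ∈ Cent(L)`, `u ∈ A`;
hence `Cent(L ⊗ A) ≅ Cent(L) ⊗ A`. -/
theorem centroid_current_perfect (K : Type*) [Field K]
    (L : Type*) [LieRing L] [LieAlgebra K L]
    (A : Type*) [CommRing A] [Algebra K A]
    (hperf : LieAlgebra.derivedSeries K L 1 = ⊤)
    (hfin : FiniteDimensional K L ∨ FiniteDimensional K A)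
    (Br : L ⊗[K] A →ₗ[K] L ⊗[K] A →ₗ[K] L ⊗[K] A)
    (hBr : ∀ (x y : L) (a b : A), Br (x ⊗ₜ a) (y ⊗ₜ b) = ⁅x, y⁆ ⊗ₜ (a * b))
    (Φ : L ⊗[K] A →ₗ[K] L ⊗[K] A)
    (hΦ : ∀ u w, Φ (Br u w) = Br u (Φ w)) :
    ∃ (k : ℕ) (φ : Fin k → (L →ₗ[K] L)) (u : Fin k → A),
      (∀ i, ∀ x y : L, (φ i) ⁅x, y⁆ = ⁅x, (φ i) y⁆) ∧
      Φ = ∑ i, TensorProduct.map (φ i) (LinearMap.mulRight K (u i)) := by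
  classical
  set ι := Module.Basis.ofVectorSpaceIndex K A with hι
  set c : Module.Basis ι K A := Module.Basis.ofVectorSpace K A with hc
  set E : L ⊗[K] A ≃ₗ[K] (ι →₀ L) :=
    (LinearEquiv.lTensor L c.repr).trans (TensorProduct.finsuppScalarRight K K L ι) with hEdef
  set T : L →ₗ[K] (ι →₀ L) :=
    E.toLinearMap ∘ₗ Φ ∘ₗ ((TensorProduct.mk K L A).flip 1) with hT
  have hTx : ∀ x : L, T x = E (Φ (x ⊗ₜ[K] (1 : A))) := fun x => rfl
  -- E on tensors with basis vectors
  have hE : ∀ (z : L) (i : ι), E (z ⊗ₜ[K] (c i : A)) = Finsupp.single i z := by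
    intro z i
    show (TensorProduct.finsuppScalarRight K K L ι)
      ((LinearEquiv.lTensor L c.repr) (z ⊗ₜ[K] (c i : A))) = _
    rw [LinearEquiv.lTensor_tmul, Module.Basis.repr_self,
      TensorProduct.finsuppScalarRight_apply_tmul, Finsupp.sum_single_index]
    · rw [one_smul]
    · rw [zero_smul, Finsupp.single_zero]
  -- uniform finite support
  obtain ⟨s, hs⟩ : ∃ s : Finset ι, ∀ x : L, (T x).support ⊆ s := by
    rcases hfin with hL | hA
    · obtain ⟨n, v, hv⟩ := Module.Finite.exists_fin (R := K) (M := L)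
      haveI : DecidableEq ι := Classical.decEq _
      have s0 : Finset ι :=
        Finset.biUnion (Finset.univ : Finset (Fin n)) (fun j => (T (v j)).support)
      have hsx : ∀ x : L, (T x).support ⊆
          Finset.biUnion (Finset.univ : Finset (Fin n)) (fun j => (T (v j)).support) := by
        intro x
        have hx : x ∈ Submodule.span K (Set.range v) := hv ▸ Submodule.mem_top
        induction hx using Submodule.span_induction with
        | mem z hz =>
            obtain ⟨j, rfl⟩ := hz
            exact Finset.subset_biUnion_of_mem (fun j => (T (v j)).support) (Finset.mem_univ j)
        | zero => simp
        | add y z _ _ hy hz =>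
            rw [map_add]
            exact Finsupp.support_add.trans (Finset.union_subset hy hz)
        | smul r y _ hy =>
            rw [map_smul]
            exact (Finsupp.support_smul).trans hy
      exact ⟨_, hsx⟩
    · haveI := hA
      exact ⟨Finset.univ, fun x => Finset.subset_univ _⟩
  -- component maps
  set ψ : ι → (L →ₗ[K] L) := fun i => (Finsupp.lapply i) ∘ₗ T with hψdef
  have hψ : ∀ (i : ι) (x : L), ψ i x = T x i := fun i x => rfl
  -- reconstruction
  have hrepr : ∀ w : L ⊗[K] A, (E w).support ⊆ s →
      w = ∑ j ∈ s, (E w j) ⊗ₜ[K] (c j : A) := by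
    intro w hw
    apply E.injective
    rw [map_sum]
    ext i
    rw [Finsupp.finset_sum_apply]
    simp_rw [hE]
    by_cases hi : i ∈ s
    · rw [Finset.sum_eq_single i (fun j _ hj => Finsupp.single_eq_of_ne' hj)
        (fun h => absurd hi h), Finsupp.single_eq_same]
    · rw [Finset.sum_eq_zero fun j hj =>
        Finsupp.single_eq_of_ne (by rintro rfl; exact hi hj)]
      exact Finsupp.notMem_support_iff.mp fun h => hi (hw h)
  have hΨ : ∀ x : L, Φ (x ⊗ₜ[K] (1 : A)) = ∑ j ∈ s, (ψ j x) ⊗ₜ[K] (c j : A) := by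
    intro x
    have := hrepr (Φ (x ⊗ₜ[K] (1 : A))) (by rw [← hTx]; exact hs x)
    simpa [← hTx, ← hψ] using this
  -- key bracket computation
  have hbr : ∀ (x y : L) (a : A),
      Φ (⁅x, y⁆ ⊗ₜ[K] a) = ∑ j ∈ s, ⁅x, ψ j y⁆ ⊗ₜ[K] (a * (c j : A)) := by
    intro x y a
    have h1 : Φ (⁅x, y⁆ ⊗ₜ[K] a) = Br (x ⊗ₜ[K] a) (Φ (y ⊗ₜ[K] (1 : A))) := by
      rw [← hΦ, hBr, mul_one]
    rw [h1, hΨ, map_sum]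
    exact Finset.sum_congr rfl fun j _ => hBr x (ψ j y) a (c j)
  -- centroid property for components
  have hcent : ∀ j ∈ s, ∀ x y : L, ψ j ⁅x, y⁆ = ⁅x, ψ j y⁆ := by
    intro j hj x y
    have h1 : ψ j ⁅x, y⁆ = E (Φ (⁅x, y⁆ ⊗ₜ[K] (1 : A))) j := by rw [hψ, hTx]
    rw [h1, hbr]
    simp_rw [one_mul]
    rw [map_sum]
    simp_rw [hE]
    rw [Finsupp.finset_sum_apply,
      Finset.sum_eq_single j (fun i _ hi => Finsupp.single_eq_of_ne' hi)
        (fun h => absurd hj h), Finsupp.single_eq_same]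
  -- spanning by brackets
  have hspan : (⊤ : Submodule K L) ≤
      Submodule.span K {m : L | ∃ x y : L, ⁅x, y⁆ = m} := by
    have h2 : LieAlgebra.derivedSeries K L 1 =
        ⁅(⊤ : LieIdeal K L), (⊤ : LieIdeal K L)⁆ := by
      rw [LieAlgebra.derivedSeries_def, LieAlgebra.derivedSeriesOfIdeal_succ,
        LieAlgebra.derivedSeriesOfIdeal_zero]
    have h1 : (⊤ : Submodule K L) =
        LieSubmodule.toSubmodule (⁅(⊤ : LieIdeal K L), (⊤ : LieIdeal K L)⁆ : LieIdeal K L) := by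
      rw [← h2, hperf, LieSubmodule.top_toSubmodule]
    rw [h1, LieSubmodule.lieIdeal_oper_eq_linear_span]
    refine Submodule.span_mono ?_
    rintro m ⟨x, n, h⟩
    exact ⟨x, n, h⟩
  -- assemble
  refine ⟨s.card, fun i => ψ (s.equivFin.symm i), fun i => (c (s.equivFin.symm i) : A),
    fun i x y => hcent _ (s.equivFin.symm i).2 x y, ?_⟩
  have hsum : ∑ i : Fin s.card,
      TensorProduct.map (ψ (s.equivFin.symm i))
        (LinearMap.mulRight K ((c (s.equivFin.symm i) : A))) =
      ∑ j ∈ s, TensorProduct.map (ψ j) (LinearMap.mulRight K ((c j : A))) := by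
    rw [← Finset.sum_coe_sort s
      (fun j => TensorProduct.map (ψ j) (LinearMap.mulRight K ((c j : A))))]
    exact Equiv.sum_comp s.equivFin.symm
      (fun j : {x // x ∈ s} => TensorProduct.map (ψ ↑j) (LinearMap.mulRight K ((c ↑j : A))))
  rw [hsum]
  apply TensorProduct.ext'
  intro z a
  have hz : z ∈ Submodule.span K {m : L | ∃ x y : L, ⁅x, y⁆ = m} :=
    hspan Submodule.mem_top
  induction hz using Submodule.span_induction with
  | mem m hm =>
      obtain ⟨x, y, rfl⟩ := hm
      rw [hbr]
      rw [LinearMap.sum_apply]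
      refine Finset.sum_congr rfl fun j hj => ?_
      rw [TensorProduct.map_tmul, LinearMap.mulRight_apply, hcent j hj]
  | zero => simp [TensorProduct.zero_tmul]
  | add y z _ _ hy hz =>
      rw [TensorProduct.add_tmul, map_add, map_add, hy, hz]
  | smul r y _ hy =>
      rw [← TensorProduct.smul_tmul', map_smul, map_smul, hy]
end
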